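/- Let φ⁺, φ⁻, ψ⁺, ψ⁻ : ℝ^d → [0,∞) be measurable and integrable, z⁺, z⁻ > 0, and let ρ_t⁺(x), ρ_t⁻(x) be jointly measurable, bounded functions of (t, x) ∈ [0,∞) × ℝ^d such that for each x the maps t ↦ ρ_t^±(x) are differentiable and satisfy the kinetic (Vlasov) equations of the two-interacting Glauber (Widom–Rowlinson-type) model: ∂ρ_t⁻/∂t(x) = −ρ_t⁻(x) + z⁻ e^{−(φ⁻ ∗ ρ_t⁻)(x)} e^{−(ψ⁺ ∗ ρ_t⁺)(x)} and ∂ρ_t⁺/∂t(x) = −ρ_t⁺(x) + z⁺ e^{−(φ⁺ ∗ ρ_t⁺)(x)} e^{−(ψ⁻ ∗ ρ_t⁻)(x)}. Then for every two-component finite configuration η = (η⁺, η⁻), the product function r_t(η) := (∏_{x∈η⁺} ρ_t⁺(x)) · (∏_{x∈η⁻} ρ_t⁻(x)) is differentiable in t and satisfies ∂r_t(η)/∂t = −(|η⁺| + |η⁻|) r_t(η) + Σ_{x∈η⁺} z⁺ e^{−(φ⁺ ∗ ρ_t⁺)(x)} e^{−(ψ⁻ ∗ ρ_t⁻)(x)}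 (∏_{y∈η⁺∖{x}} ρ_t⁺(y)) (∏_{y∈η⁻} ρ_t⁻(y)) + Σ_{x∈η⁻} z⁻ e^{−(φ⁻ ∗ ρ_t⁻)(x)} e^{−(ψ⁺ ∗ ρ_t⁺)(x)} (∏_{y∈η⁺} ρ_t⁺(y)) (∏_{y∈η⁻∖{x}} ρ_t⁻(y)). -/

import Mathlib

open MeasureTheory Real Finset

/-- Vlasov scaling of the two-interacting Glauber (Widom–Rowlinson-type) model,
an instance of Theorem 4.2(3): if the bounded, jointly measurable densities
`ρ_t^±` solve the kinetic equations (5.4)–(5.5), then for every two-component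
finite configuration `η = (η⁺, η⁻)` the Lebesgue–Poisson exponential
`r_t(η) = ∏_{x∈η⁺} ρ_t⁺(x) · ∏_{x∈η⁻} ρ_t⁻(x)` is differentiable in `t` and
solves the limiting hierarchy. Here `(f ∗ g)(x) = ∫ f(x−y) g(y) dy`. -/
theorem statement11 (d : ℕ) (hd : 1 ≤ d)
    (φp φm ψp ψm : (Fin d → ℝ) → ℝ)
    (hφp0 : ∀ x, 0 ≤ φp x) (hφm0 : ∀ x, 0 ≤ φm x)
    (hψp0 : ∀ x, 0 ≤ ψp x) (hψm0 : ∀ x, 0 ≤ ψm x)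
    (hφpmeas : Measurable φp) (hφmmeas : Measurable φm)
    (hψpmeas : Measurable ψp) (hψmmeas : Measurable ψm)
    (hφpint : Integrable φp) (hφmint : Integrable φm)
    (hψpint : Integrable ψp) (hψmint : Integrable ψm)
    (zp zm : ℝ) (hzp : 0 < zp) (hzm : 0 < zm)
    (ρp ρm : ℝ → (Fin d → ℝ) → ℝ)
    (hρpmeas : Measurable (Function.uncurry ρp))
    (hρmmeas : Measurable (Function.uncurry ρm))
    (hρpbdd : ∃ C, ∀ t ∈ Set.Ici (0 : ℝ), ∀ x, |ρp t x| ≤ C)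
    (hρmbdd : ∃ C, ∀ t ∈ Set.Ici (0 : ℝ), ∀ x, |ρm t x| ≤ C)
    (hodem : ∀ x, ∀ t ∈ Set.Ici (0 : ℝ),
      HasDerivWithinAt (fun τ => ρm τ x)
        (-(ρm t x) + zm * exp (-(∫ y, φm (x - y) * ρm t y)) *
          exp (-(∫ y, ψp (x - y) * ρp t y))) (Set.Ici 0) t)
    (hodep : ∀ x, ∀ t ∈ Set.Ici (0 : ℝ),
      HasDerivWithinAt (fun τ => ρp τ x)
        (-(ρp t x) + zp * exp (-(∫ y, φp (x - y) * ρp t y)) *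
          exp (-(∫ y, ψm (x - y) * ρm t y))) (Set.Ici 0) t) :
    ∀ ηp ηm : Finset (Fin d → ℝ), Disjoint ηp ηm → ∀ t ∈ Set.Ici (0 : ℝ),
      HasDerivWithinAt
        (fun τ => (∏ x ∈ ηp, ρp τ x) * ∏ x ∈ ηm, ρm τ x)
        (-(((ηp.card : ℝ) + (ηm.card : ℝ))) *
            ((∏ x ∈ ηp, ρp t x) * ∏ x ∈ ηm, ρm t x) +
          (∑ x ∈ ηp, zp * exp (-(∫ y, φp (x - y) * ρp t y)) *
              exp (-(∫ y, ψm (x - y) * ρm t y)) *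
              ((∏ y ∈ ηp.erase x, ρp t y) * ∏ y ∈ ηm, ρm t y)) +
          (∑ x ∈ ηm, zm * exp (-(∫ y, φm (x - y) * ρm t y)) *
              exp (-(∫ y, ψp (x - y) * ρp t y)) *
              ((∏ y ∈ ηp, ρp t y) * ∏ y ∈ ηm.erase x, ρm t y)))
        (Set.Ici 0) t := by
  intro ηp ηm _ t ht
  have hF : HasDerivWithinAt (fun τ => ∏ x ∈ ηp, ρp τ x)
      (∑ x ∈ ηp, (∏ y ∈ ηp.erase x, ρp t y) • (-(ρp t x) +
        zp * exp (-(∫ y, φp (x - y) * ρp t y)) * exp (-(∫ y, ψm (x - y) * ρm t y))))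
      (Set.Ici 0) t :=
    HasDerivWithinAt.fun_finsetProd fun x _ => hodep x t ht
  have hG : HasDerivWithinAt (fun τ => ∏ x ∈ ηm, ρm τ x)
      (∑ x ∈ ηm, (∏ y ∈ ηm.erase x, ρm t y) • (-(ρm t x) +
        zm * exp (-(∫ y, φm (x - y) * ρm t y)) * exp (-(∫ y, ψp (x - y) * ρp t y))))
      (Set.Ici 0) t :=
    HasDerivWithinAt.fun_finsetProd fun x _ => hodem x t ht
  have key := hF.fun_mul hG
  refine key.congr_deriv ?_
  have e1 : ∑ x ∈ ηp, (∏ y ∈ ηp.erase x, ρp t y) * (-(ρp t x))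
      = ∑ _x ∈ ηp, -(∏ y ∈ ηp, ρp t y) :=
    Finset.sum_congr rfl fun x hx => by rw [mul_neg, Finset.prod_erase_mul _ _ hx]
  have e2 : ∑ x ∈ ηm, (∏ y ∈ ηm.erase x, ρm t y) * (-(ρm t x))
      = ∑ _x ∈ ηm, -(∏ y ∈ ηm, ρm t y) :=
    Finset.sum_congr rfl fun x hx => by rw [mul_neg, Finset.prod_erase_mul _ _ hx]
  have hFe : ∑ x ∈ ηp, (∏ y ∈ ηp.erase x, ρp t y) • (-(ρp t x) +
        zp * exp (-(∫ y, φp (x - y) * ρp t y)) * exp (-(∫ y, ψm (x - y) * ρm t y)))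
      = -(ηp.card : ℝ) * (∏ x ∈ ηp, ρp t x) +
        ∑ x ∈ ηp, zp * exp (-(∫ y, φp (x - y) * ρp t y)) *
          exp (-(∫ y, ψm (x - y) * ρm t y)) * ∏ y ∈ ηp.erase x, ρp t y := by
    simp only [smul_eq_mul, mul_add]
    rw [Finset.sum_add_distrib, e1, Finset.sum_const, nsmul_eq_mul]
    congr 1
    · ring
    · exact Finset.sum_congr rfl fun x _ => mul_comm _ _
  have hGe : ∑ x ∈ ηm, (∏ y ∈ ηm.erase x, ρm t y) • (-(ρm t x) +
        zm * exp (-(∫ y, φm (x - y) * ρm t y)) * exp (-(∫ y, ψp (x - y) * ρp t y)))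
      = -(ηm.card : ℝ) * (∏ x ∈ ηm, ρm t x) +
        ∑ x ∈ ηm, zm * exp (-(∫ y, φm (x - y) * ρm t y)) *
          exp (-(∫ y, ψp (x - y) * ρp t y)) * ∏ y ∈ ηm.erase x, ρm t y := by
    simp only [smul_eq_mul, mul_add]
    rw [Finset.sum_add_distrib, e2, Finset.sum_const, nsmul_eq_mul]
    congr 1
    · ring
    · exact Finset.sum_congr rfl fun x _ => mul_comm _ _
  have e3 : ∑ x ∈ ηp, (zp * exp (-(∫ y, φp (x - y) * ρp t y)) *
        exp (-(∫ y, ψm (x - y) * ρm t y)) * ∏ y ∈ ηp.erase x, ρp t y) * ∏ x ∈ ηm, ρm t x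
      = ∑ x ∈ ηp, zp * exp (-(∫ y, φp (x - y) * ρp t y)) *
        exp (-(∫ y, ψm (x - y) * ρm t y)) *
        ((∏ y ∈ ηp.erase x, ρp t y) * ∏ y ∈ ηm, ρm t y) :=
    Finset.sum_congr rfl fun x _ => by ring
  have e4 : ∑ x ∈ ηm, (∏ x ∈ ηp, ρp t x) * (zm * exp (-(∫ y, φm (x - y) * ρm t y)) *
        exp (-(∫ y, ψp (x - y) * ρp t y)) * ∏ y ∈ ηm.erase x, ρm t y)
      = ∑ x ∈ ηm, zm * exp (-(∫ y, φm (x - y) * ρm t y)) *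
        exp (-(∫ y, ψp (x - y) * ρp t y)) *
        ((∏ y ∈ ηp, ρp t y) * ∏ y ∈ ηm.erase x, ρm t y) :=
    Finset.sum_congr rfl fun x _ => by ring
  rw [hFe, hGe, add_mul, mul_add, Finset.sum_mul, Finset.mul_sum, e3, e4]
  ring
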